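/- Let X ∈ ℝ^{n×n} be symmetric positive semidefinite with nonnegative entries, all row sums equal to 1, and trace(X) ≤ r. Then ‖X − X₀‖_F² ≤ 2⟨X₀ − X, X₀⟩. -/

import Mathlib

open Matrix

noncomputable section

/-- The size `m_k` of cluster `C_k = {i : z i = k}` of the partition given by `z`. -/
def clusterSize {n r : ℕ} (z : Fin n → Fin r) (k : Fin r) : ℕ :=
  (Finset.univ.filter fun i => z i = k).card

/-- The smallest cluster size `m_min`. -/
def mMin {n r : ℕ} [NeZero r] (z : Fin n → Fin r) : ℕ :=
  Finset.univ.inf' Finset.univ_nonempty (clusterSize z)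

/-- The largest cluster size `m_max`. -/
def mMax {n r : ℕ} [NeZero r] (z : Fin n → Fin r) : ℕ :=
  Finset.univ.sup' Finset.univ_nonempty (clusterSize z)

/-- The ground-truth clustering matrix `X₀`, `(X₀)_{ij} = 1/m_k` if `i,j ∈ C_k`, else `0`. -/
def groundTruth {n r : ℕ} (z : Fin n → Fin r) : Matrix (Fin n) (Fin n) ℝ :=
  Matrix.of fun i j => if z i = z j then ((clusterSize z (z i) : ℝ))⁻¹ else 0

/-- Trace inner product `⟨A, B⟩ = trace (Aᵀ B) = ∑_{ij} A_{ij} B_{ij}`. -/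
def ip {n : ℕ} (A B : Matrix (Fin n) (Fin n) ℝ) : ℝ := ∑ i, ∑ j, A i j * B i j

/-- Squared Frobenius norm `‖A‖_F²`. -/
def frobSq {m k : ℕ} (A : Matrix (Fin m) (Fin k) ℝ) : ℝ := ∑ i, ∑ j, (A i j) ^ 2

/-- The feasible set `F` of the SDP: `X ⪰ 0`, `0 ≤ X_{ij} ≤ 1/m_min`, all row sums `1`,
`trace X = r`. -/
def feasSet {n r : ℕ} [NeZero r] (z : Fin n → Fin r) (X : Matrix (Fin n) (Fin n) ℝ) : Prop :=
  X.PosSemidef ∧ (∀ i j, 0 ≤ X i j) ∧ (∀ i j, X i j ≤ ((mMin z : ℝ))⁻¹) ∧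
    (∀ i, ∑ j, X i j = 1) ∧ X.trace = (r : ℝ)

/-- Minimum of a real-valued function over the (nonempty) index set `Fin r`. -/
def rMin {r : ℕ} [NeZero r] (f : Fin r → ℝ) : ℝ :=
  Finset.univ.inf' Finset.univ_nonempty f

section helperLemmas
variable {n r : ℕ}

lemma psd_trace_mul_nonneg (X Y : Matrix (Fin n) (Fin n) ℝ) (hX : X.PosSemidef)
    (hY : Y.PosSemidef) : 0 ≤ (X * Y).trace := by
  obtain ⟨S, hSpsd, hSS⟩ : ∃ S : Matrix (Fin n) (Fin n) ℝ, S.PosSemidef ∧ S * S = X :=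
    by
      open scoped MatrixOrder in
      exact ⟨CFC.sqrt X, (CFC.sqrt_nonneg X).posSemidef, CFC.sqrt_mul_sqrt_self X hX.nonneg⟩
  have h2 : (X * Y).trace = (S * Y * S).trace := by
    rw [← hSS, Matrix.mul_assoc, trace_mul_comm]
  have h3 : (S * Y * S).PosSemidef := by
    have := hY.mul_mul_conjTranspose_same S
    rwa [hSpsd.1.eq] at this
  rw [h2, Matrix.trace]
  exact Finset.sum_nonneg fun i _ => by
    have := h3.dotProduct_mulVec_nonneg (Pi.single i 1)
    simpa [dotProduct, mulVec, Pi.single_apply, Finset.sum_ite_eq, Matrix.diag] using this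

lemma one_sub_psd (X : Matrix (Fin n) (Fin n) ℝ) (hpsd : X.PosSemidef)
    (hnn : ∀ i j, 0 ≤ X i j) (hrow : ∀ i, ∑ j, X i j = 1) :
    ((1 : Matrix (Fin n) (Fin n) ℝ) - X).PosSemidef := by
  have hsymm : ∀ i j, X j i = X i j := by
    intro i j
    conv_lhs => rw [← hpsd.1]
    simp [Matrix.conjTranspose_apply]
  have hcol : ∀ j, ∑ i, X i j = 1 := fun j => by
    have h : ∑ i, X i j = ∑ i, X j i := Finset.sum_congr rfl fun i _ => (hsymm i j).symm
    rw [h]; exact hrow j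
  refine Matrix.PosSemidef.of_dotProduct_mulVec_nonneg ?_ ?_
  · exact Matrix.isHermitian_one.sub hpsd.1
  · intro v
    have key : ∑ i, ∑ j, X i j * v i * v j ≤ ∑ i, (v i) ^ 2 := by
      have step1 : ∑ i, ∑ j, X i j * v i * v j
          ≤ ∑ i, ∑ j, X i j * ((v i) ^ 2 + (v j) ^ 2) / 2 := by
        refine Finset.sum_le_sum fun i _ => Finset.sum_le_sum fun j _ => ?_
        nlinarith [sq_nonneg (v i - v j), hnn i j,
          mul_nonneg (hnn i j) (sq_nonneg (v i - v j))]
      have step2 : ∑ i, ∑ j, X i j * ((v i) ^ 2 + (v j) ^ 2) / 2 = ∑ i, (v i) ^ 2 := by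
        have e1 : ∀ i j : Fin n, X i j * ((v i) ^ 2 + (v j) ^ 2) / 2
            = X i j * ((v i) ^ 2 / 2) + X i j * ((v j) ^ 2 / 2) := fun i j => by ring
        simp only [e1, Finset.sum_add_distrib]
        have hA : ∑ i, ∑ j, X i j * ((v i) ^ 2 / 2) = (∑ i, (v i) ^ 2) / 2 := by
          rw [Finset.sum_div]
          refine Finset.sum_congr rfl fun i _ => ?_
          rw [← Finset.sum_mul, hrow i, one_mul]
        have hB : ∑ i, ∑ j, X i j * ((v j) ^ 2 / 2) = (∑ i, (v i) ^ 2) / 2 := by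
          rw [Finset.sum_comm, Finset.sum_div]
          refine Finset.sum_congr rfl fun j _ => ?_
          rw [← Finset.sum_mul, hcol j, one_mul]
        rw [hA, hB]; ring
      linarith
    have expand : star v ⬝ᵥ ((1 : Matrix (Fin n) (Fin n) ℝ) - X) *ᵥ v
        = ∑ i, (v i) ^ 2 - ∑ i, ∑ j, X i j * v i * v j := by
      simp only [star_trivial, sub_mulVec, one_mulVec, dotProduct_sub]
      congr 1
      · simp [dotProduct, pow_two]
      · simp only [dotProduct, mulVec, Finset.mul_sum]
        exact Finset.sum_congr rfl fun i _ => Finset.sum_congr rfl fun j _ => by ring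
    rw [expand]
    linarith
end helperLemmas

lemma aux_frob_gt {n r : ℕ} (z : Fin n → Fin r) (hz : Function.Surjective z) :
    frobSq (groundTruth z) = (r : ℝ) := by
  have hcard : ∀ k, (0 : ℝ) < (clusterSize z k : ℝ) := by
    intro k
    obtain ⟨i, hi⟩ := hz k
    have : i ∈ Finset.univ.filter fun i => z i = k := by simp [hi]
    exact_mod_cast Finset.card_pos.mpr ⟨i, this⟩
  have inner : ∀ i, ∑ j, (groundTruth z i j) ^ 2 = ((clusterSize z (z i) : ℝ))⁻¹ := by
    intro i
    have h1 : ∀ j, (groundTruth z i j) ^ 2 =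
        if z j = z i then ((clusterSize z (z i) : ℝ))⁻¹ ^ 2 else 0 := by
      intro j
      simp only [groundTruth, Matrix.of_apply]
      by_cases h : z i = z j
      · simp [h, eq_comm]
      · rw [if_neg h, if_neg (fun hh : z j = z i => h hh.symm)]
        ring
    rw [Finset.sum_congr rfl fun j _ => h1 j, ← Finset.sum_filter]
    simp only [Finset.sum_const, nsmul_eq_mul]
    have : ((Finset.univ.filter fun j => z j = z i).card : ℝ) = (clusterSize z (z i) : ℝ) := by
      simp [clusterSize]
    rw [this]
    rw [pow_two, ← mul_assoc, mul_inv_cancel₀ (hcard (z i)).ne', one_mul]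
  unfold frobSq
  rw [Finset.sum_congr rfl fun i _ => inner i]
  have h2 : ∀ i : Fin n, ((clusterSize z (z i) : ℝ))⁻¹ =
      ∑ k, if z i = k then ((clusterSize z k : ℝ))⁻¹ else 0 := by
    intro i; simp
  rw [Finset.sum_congr rfl fun i _ => h2 i, Finset.sum_comm]
  have h3 : ∀ k : Fin r, (∑ i, if z i = k then ((clusterSize z k : ℝ))⁻¹ else 0) = 1 := by
    intro k
    rw [← Finset.sum_filter]
    simp only [Finset.sum_const, nsmul_eq_mul]
    have : ((Finset.univ.filter fun i => z i = k).card : ℝ) = (clusterSize z k : ℝ) := by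
      simp [clusterSize]
    rw [this, mul_inv_cancel₀ (hcard k).ne']
  rw [Finset.sum_congr rfl fun k _ => h3 k]
  simp


/-- If `X` is symmetric PSD with nonnegative entries, all row sums `1`
and `trace X ≤ r`, then `‖X − X₀‖_F² ≤ 2 ⟨X₀ − X, X₀⟩`. -/
theorem frob_diff_le_ip {n r : ℕ} (z : Fin n → Fin r) (hz : Function.Surjective z)
    (X : Matrix (Fin n) (Fin n) ℝ) (hpsd : X.PosSemidef) (hnn : ∀ i j, 0 ≤ X i j)
    (hrow : ∀ i, ∑ j, X i j = 1) (htr : X.trace ≤ (r : ℝ)) :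
    frobSq (X - groundTruth z) ≤ 2 * ip (groundTruth z - X) (groundTruth z) := by
  set X0 := groundTruth z with hX0
  -- symmetry of X
  have hsymm : ∀ i j, X j i = X i j := by
    intro i j
    conv_lhs => rw [← hpsd.1]
    simp [Matrix.conjTranspose_apply]
  -- frobSq X = trace (X * X)
  have hfx : frobSq X = (X * X).trace := by
    simp only [frobSq, Matrix.trace, Matrix.diag, Matrix.mul_apply]
    exact Finset.sum_congr rfl fun i _ => Finset.sum_congr rfl fun j _ => by
      rw [hsymm j i, pow_two]
  -- trace (X * X) ≤ trace X
  have hle : (X * X).trace ≤ X.trace := by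
    have h1 := psd_trace_mul_nonneg X (1 - X) hpsd (one_sub_psd X hpsd hnn hrow)
    have h2 : (X * (1 - X)).trace = X.trace - (X * X).trace := by
      rw [Matrix.mul_sub, Matrix.mul_one, Matrix.trace_sub]
    linarith [h2 ▸ h1]
  -- frobSq X0 = r
  have hfr : frobSq X0 = (r : ℝ) := aux_frob_gt z hz
  have hXle : frobSq X ≤ frobSq X0 := by
    rw [hfx, hfr]; linarith
  -- algebraic identity
  have key : frobSq (X - X0) = frobSq X - frobSq X0 + 2 * ip (X0 - X) X0 := by
    simp only [frobSq, ip, Matrix.sub_apply, Finset.mul_sum, ← Finset.sum_sub_distrib,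
      ← Finset.sum_add_distrib]
    exact Finset.sum_congr rfl fun i _ => Finset.sum_congr rfl fun j _ => by ring
  rw [key]
  linarith
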